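/- Z_f is the tightest zone containing S, in the following sense: for every pair of indices α, β ∈ {0,1,…,m+n} (where coordinate 0 of a point of ℝ^{m+n} is by convention the constant 0) and every real constant c, if every point p of S satisfies p_α − p_β ≤ c, then every point q of Z_f satisfies q_α − q_β ≤ c. -/

import Mathlib

/-- Coordinates of a point `(x, y) ∈ ℝ^(m+n)` indexed by `{0, 1, …, m+n}`,
where coordinate `0` (= `none`) is by convention the constant `0`. -/
def coord0 {m n : ℕ} (x : Fin m → ℝ) (y : Fin n → ℝ) (a : Option (Fin m ⊕ Fin n)) : ℝ :=
  Option.elim a 0 (Sum.elim x y)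

lemma zone_feas {m : ℕ} (xl xu : Fin m → ℝ) (h : ∀ j, xl j ≤ xu j) (xw : Fin m → ℝ)
    (hw : ∀ k, xw k = xl k ∨ xw k = xu k) : ∀ j, xl j ≤ xw j ∧ xw j ≤ xu j := by
  intro j
  rcases hw j with h' | h' <;> rw [h'] <;> exact ⟨by linarith [h j], by linarith [h j]⟩

lemma sum_diff_single {m : ℕ} (f g : Fin m → ℝ) (j : Fin m)
    (h : ∀ k, k ≠ j → f k = g k) : ∑ k, f k = ∑ k, g k + (f j - g j) := by
  have h1 : ∑ k, (f k - g k) = f j - g j := by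
    apply Fintype.sum_eq_single
    intro k hk
    rw [h k hk]; ring
  have h2 : ∑ k, (f k - g k) = ∑ k, f k - ∑ k, g k := Finset.sum_sub_distrib f g
  linarith

theorem zone_tightest (m n : ℕ) (hm : 1 ≤ m) (hn : 1 ≤ n)
    (w : Fin n → Fin m → ℝ) (b : Fin n → ℝ)
    (xl xu : Fin m → ℝ) (hbounds : ∀ j, xl j ≤ xu j)
    (mlow Mup : Fin n → ℝ)
    (hmlow : ∀ i, mlow i = b i + ∑ j, w i j * (if w i j < 0 then xu j else xl j))
    (hMup : ∀ i, Mup i = b i + ∑ j, w i j * (if w i j < 0 then xl j else xu j))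
    (Delta : Fin n → Fin n → ℝ) (delta : Fin n → Fin m → ℝ)
    (hDelta : ∀ i₁ i₂, Delta i₁ i₂ = (b i₁ - b i₂) +
        ∑ j, (w i₁ j - w i₂ j) * (if w i₁ j < w i₂ j then xl j else xu j))
    (hdelta : ∀ i j, delta i j = if w i j ≤ 0 then 0
        else if w i j ≤ 1 then w i j * (xu j - xl j) else xu j - xl j) :
    ∀ (a be : Option (Fin m ⊕ Fin n)) (cst : ℝ),
      (∀ x : Fin m → ℝ, (∀ j, xl j ≤ x j ∧ x j ≤ xu j) →
        coord0 x (fun i => ∑ j, w i j * x j + b i) a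
          - coord0 x (fun i => ∑ j, w i j * x j + b i) be ≤ cst) →
      ∀ (x : Fin m → ℝ) (y : Fin n → ℝ),
        ((∀ j, xl j ≤ x j ∧ x j ≤ xu j) ∧
        (∀ i, mlow i ≤ y i ∧ y i ≤ Mup i) ∧
        (∀ i₁ i₂, y i₁ - y i₂ ≤ Delta i₁ i₂) ∧
        (∀ i j, mlow i - xu j + delta i j ≤ y i - x j ∧
          y i - x j ≤ Mup i - xl j - delta i j)) →
        coord0 x y a - coord0 x y be ≤ cst := by
  intro a be cst h x y ⟨hx, hy, hD, hxy⟩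
  match a, be with
  | none, none =>
      have := h xl (fun j => ⟨le_refl _, hbounds j⟩)
      simpa [coord0] using this
  | none, some (Sum.inl j) =>
      have := h xl (fun j => ⟨le_refl _, hbounds j⟩)
      simp only [coord0, Option.elim, Sum.elim_inl] at this ⊢
      linarith [(hx j).1]
  | none, some (Sum.inr i) =>
      set xw : Fin m → ℝ := fun k => if w i k < 0 then xu k else xl k with hxw
      have hfeas := zone_feas xl xu hbounds xw (fun k => by
        by_cases hc : w i k < 0 <;> simp [hxw, hc])
      have hh := h xw hfeas
      simp only [coord0, Option.elim, Sum.elim_inr] at hh ⊢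
      have hsum : ∑ j, w i j * xw j = ∑ j, w i j * (if w i j < 0 then xu j else xl j) := rfl
      rw [hsum] at hh
      have := (hy i).1
      rw [hmlow i] at this
      linarith
  | some (Sum.inl j), none =>
      have := h xu (fun j => ⟨hbounds j, le_refl _⟩)
      simp only [coord0, Option.elim, Sum.elim_inl] at this ⊢
      linarith [(hx j).2]
  | some (Sum.inl j₁), some (Sum.inl j₂) =>
      set xw : Fin m → ℝ := fun k => if k = j₂ then xl j₂ else xu k with hxw
      have hfeas := zone_feas xl xu hbounds xw (fun k => by
        by_cases hc : k = j₂ <;> simp [hxw, hc])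
      have hh := h xw hfeas
      simp only [coord0, Option.elim, Sum.elim_inl] at hh ⊢
      by_cases hc : j₁ = j₂
      · subst hc; linarith
      · have h1 : xw j₁ = xu j₁ := by simp [hxw, hc]
        have h2 : xw j₂ = xl j₂ := by simp [hxw]
        rw [h1, h2] at hh
        linarith [(hx j₁).2, (hx j₂).1]
  | some (Sum.inl j), some (Sum.inr i) =>
      set xw : Fin m → ℝ := fun k =>
        if k = j then (if w i j ≤ 1 then xu j else xl j)
        else (if w i k < 0 then xu k else xl k) with hxw
      have hfeas := zone_feas xl xu hbounds xw (fun k => by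
        by_cases hc : k = j
        · subst hc; by_cases hc2 : w i k ≤ 1 <;> simp [hxw, hc2]
        · by_cases hc2 : w i k < 0 <;> simp [hxw, hc, hc2])
      have hh := h xw hfeas
      simp only [coord0, Option.elim, Sum.elim_inl, Sum.elim_inr] at hh ⊢
      have hsum : ∑ k, w i k * xw k =
          ∑ k, w i k * (if w i k < 0 then xu k else xl k)
          + (w i j * xw j - w i j * (if w i j < 0 then xu j else xl j)) := by
        apply sum_diff_single
        intro k hk
        simp [hxw, hk]
      have hxwj : xw j = if w i j ≤ 1 then xu j else xl j := by simp [hxw]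
      rw [hsum] at hh
      have hzone := (hxy i j).1
      have hml : (∑ k, w i k * if w i k < 0 then xu k else xl k) = mlow i - b i := by
        rw [hmlow i]; ring
      rw [hml] at hh
      rw [hdelta i j] at hzone
      rw [hxwj] at hh
      -- goal: x j - y i ≤ cst
      by_cases h0 : w i j ≤ 0
      · by_cases hneg : w i j < 0
        · have h1 : w i j ≤ 1 := by linarith
          simp only [if_pos hneg, if_pos h1, if_pos h0] at hh hzone
          linarith
        · have hew : w i j = 0 := le_antisymm h0 (not_lt.mp hneg)
          simp only [if_neg hneg, if_pos h0, hew] at hh hzone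
          norm_num at hh hzone
          linarith
      · have hneg : ¬ w i j < 0 := by intro hc; exact h0 hc.le
        by_cases h1 : w i j ≤ 1
        · simp only [if_neg hneg, if_pos h1, if_neg h0] at hh hzone
          nlinarith [hh, hzone]
        · simp only [if_neg hneg, if_neg h1, if_neg h0] at hh hzone
          nlinarith [hh, hzone]
  | some (Sum.inr i), none =>
      set xw : Fin m → ℝ := fun k => if w i k < 0 then xl k else xu k with hxw
      have hfeas := zone_feas xl xu hbounds xw (fun k => by
        by_cases hc : w i k < 0 <;> simp [hxw, hc])
      have hh := h xw hfeas
      simp only [coord0, Option.elim, Sum.elim_inr] at hh ⊢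
      have hsum : ∑ j, w i j * xw j = ∑ j, w i j * (if w i j < 0 then xl j else xu j) := rfl
      rw [hsum] at hh
      have := (hy i).2
      rw [hMup i] at this
      linarith
  | some (Sum.inr i₁), some (Sum.inr i₂) =>
      set xw : Fin m → ℝ := fun k => if w i₁ k < w i₂ k then xl k else xu k with hxw
      have hfeas := zone_feas xl xu hbounds xw (fun k => by
        by_cases hc : w i₁ k < w i₂ k <;> simp [hxw, hc])
      have hh := h xw hfeas
      simp only [coord0, Option.elim, Sum.elim_inr] at hh ⊢
      have hsum : ∑ j, w i₁ j * xw j - ∑ j, w i₂ j * xw j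
          = ∑ j, (w i₁ j - w i₂ j) * (if w i₁ j < w i₂ j then xl j else xu j) := by
        rw [← Finset.sum_sub_distrib]
        apply Finset.sum_congr rfl
        intro k _
        simp only [hxw]
        ring
      have hzone := hD i₁ i₂
      rw [hDelta i₁ i₂] at hzone
      linarith
  | some (Sum.inr i), some (Sum.inl j) =>
      set xw : Fin m → ℝ := fun k =>
        if k = j then (if w i j ≤ 1 then xl j else xu j)
        else (if w i k < 0 then xl k else xu k) with hxw
      have hfeas := zone_feas xl xu hbounds xw (fun k => by
        by_cases hc : k = j
        · subst hc; by_cases hc2 : w i k ≤ 1 <;> simp [hxw, hc2]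
        · by_cases hc2 : w i k < 0 <;> simp [hxw, hc, hc2])
      have hh := h xw hfeas
      simp only [coord0, Option.elim, Sum.elim_inl, Sum.elim_inr] at hh ⊢
      have hsum : ∑ k, w i k * xw k =
          ∑ k, w i k * (if w i k < 0 then xl k else xu k)
          + (w i j * xw j - w i j * (if w i j < 0 then xl j else xu j)) := by
        apply sum_diff_single
        intro k hk
        simp [hxw, hk]
      have hxwj : xw j = if w i j ≤ 1 then xl j else xu j := by simp [hxw]
      rw [hsum] at hh
      have hzone := (hxy i j).2
      have hml : (∑ k, w i k * if w i k < 0 then xl k else xu k) = Mup i - b i := by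
        rw [hMup i]; ring
      rw [hml] at hh
      rw [hdelta i j] at hzone
      rw [hxwj] at hh
      by_cases h0 : w i j ≤ 0
      · by_cases hneg : w i j < 0
        · have h1 : w i j ≤ 1 := by linarith
          simp only [if_pos hneg, if_pos h1, if_pos h0] at hh hzone
          linarith
        · have hew : w i j = 0 := le_antisymm h0 (not_lt.mp hneg)
          simp only [if_neg hneg, if_pos h0, hew] at hh hzone
          norm_num at hh hzone
          linarith
      · have hneg : ¬ w i j < 0 := by intro hc; exact h0 hc.le
        by_cases h1 : w i j ≤ 1
        · simp only [if_neg hneg, if_pos h1, if_neg h0] at hh hzone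
          nlinarith [hh, hzone]
        · simp only [if_neg hneg, if_neg h1, if_neg h0] at hh hzone
          nlinarith [hh, hzone]
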